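/- When α = β = 1, the fractional Euler-Lagrange equations ∂₂L(t,q,q̇,-q̇) + ₜD_b^1 ∂₃L + ₐD_t^1 ∂₄L = 0 reduce to the classical Euler-Lagrange equations (d/dt)∂₃𝓛(t,q,q̇) = ∂₂𝓛(t,q,q̇) for the Lagrangian 𝓛(t,q,v) := L(t,q,v,-v). -/

import Mathlib

open Set InnerProductSpace ContinuousLinearMap


section aux

variable {m : ℕ}

local notation "E" m => EuclideanSpace ℝ (Fin m)

-- slot injections
noncomputable def A3 (m : ℕ) : (E m) →L[ℝ] ℝ × (E m) × (E m) × (E m) :=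
  (0 : (E m) →L[ℝ] ℝ).prod ((0 : (E m) →L[ℝ] (E m)).prod
    ((ContinuousLinearMap.id ℝ (E m)).prod 0))

noncomputable def A4 (m : ℕ) : (E m) →L[ℝ] ℝ × (E m) × (E m) × (E m) :=
  (0 : (E m) →L[ℝ] ℝ).prod ((0 : (E m) →L[ℝ] (E m)).prod
    ((0 : (E m) →L[ℝ] (E m)).prod (ContinuousLinearMap.id ℝ (E m))))

lemma A3_apply (v : E m) : A3 m v = (0, 0, v, 0) := rfl
lemma A4_apply (v : E m) : A4 m v = (0, 0, 0, v) := rfl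

lemma hasFDerivAt_slot3 (F : ℝ × (E m) × (E m) × (E m) → ℝ) (hF : Differentiable ℝ F)
    (s : ℝ) (c x w : E m) :
    HasFDerivAt (fun v => F (s, c, v, w)) ((fderiv ℝ F (s, c, x, w)).comp (A3 m)) x := by
  have h1 : HasFDerivAt (fun v : E m => ((s, c, v, w) : ℝ × (E m) × (E m) × (E m)))
      (A3 m) x := by
    have heq : (fun v : E m => ((s, c, v, w) : ℝ × (E m) × (E m) × (E m)))
        = fun v => ((s, c, 0, w) : ℝ × (E m) × (E m) × (E m)) + A3 m v := by
      funext v; simp [A3_apply, Prod.ext_iff]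
    rw [heq]
    exact ((A3 m).hasFDerivAt).const_add _
  exact ((hF _).hasFDerivAt).comp x h1

lemma hasFDerivAt_slot4 (F : ℝ × (E m) × (E m) × (E m) → ℝ) (hF : Differentiable ℝ F)
    (s : ℝ) (c x w : E m) :
    HasFDerivAt (fun v => F (s, c, x, v)) ((fderiv ℝ F (s, c, x, w)).comp (A4 m)) w := by
  have h1 : HasFDerivAt (fun v : E m => ((s, c, x, v) : ℝ × (E m) × (E m) × (E m)))
      (A4 m) w := by
    have heq : (fun v : E m => ((s, c, x, v) : ℝ × (E m) × (E m) × (E m)))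
        = fun v => ((s, c, x, 0) : ℝ × (E m) × (E m) × (E m)) + A4 m v := by
      funext v; simp [A4_apply, Prod.ext_iff]
    rw [heq]
    exact ((A4 m).hasFDerivAt).const_add _
  exact ((hF _).hasFDerivAt).comp w h1

lemma hasFDerivAt_slot34 (F : ℝ × (E m) × (E m) × (E m) → ℝ) (hF : Differentiable ℝ F)
    (s : ℝ) (c x : E m) :
    HasFDerivAt (fun v => F (s, c, v, -v))
      ((fderiv ℝ F (s, c, x, -x)).comp (A3 m - A4 m)) x := by
  have h1 : HasFDerivAt (fun v : E m => ((s, c, v, -v) : ℝ × (E m) × (E m) × (E m)))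
      (A3 m - A4 m) x := by
    have heq : (fun v : E m => ((s, c, v, -v) : ℝ × (E m) × (E m) × (E m)))
        = fun v => ((s, c, 0, 0) : ℝ × (E m) × (E m) × (E m)) + (A3 m - A4 m) v := by
      funext v; simp [A3_apply, A4_apply, Prod.ext_iff]
    rw [heq]
    exact ((A3 m - A4 m).hasFDerivAt).const_add _
  exact ((hF _).hasFDerivAt).comp x h1

/-- pointwise gradient splitting -/
lemma gradient_split (F : ℝ × (E m) × (E m) × (E m) → ℝ) (hF : Differentiable ℝ F)
    (s : ℝ) (c x : E m) :
    gradient (fun v => F (s, c, v, -v)) x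
      = gradient (fun v => F (s, c, v, -x)) x
        - gradient (fun w => F (s, c, x, w)) (-x) := by
  have h1 := hasFDerivAt_slot34 F hF s c x
  have h2 := hasFDerivAt_slot3 F hF s c x (-x)
  have h3 := hasFDerivAt_slot4 F hF s c x (-x)
  have g1 : gradient (fun v => F (s, c, v, -v)) x
      = (toDual ℝ (E m)).symm ((fderiv ℝ F (s, c, x, -x)).comp (A3 m - A4 m)) :=
    (hasFDerivAt_iff_hasGradientAt.mp h1).gradient
  have g2 : gradient (fun v => F (s, c, v, -x)) x
      = (toDual ℝ (E m)).symm ((fderiv ℝ F (s, c, x, -x)).comp (A3 m)) :=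
    (hasFDerivAt_iff_hasGradientAt.mp h2).gradient
  have g3 : gradient (fun w => F (s, c, x, w)) (-x)
      = (toDual ℝ (E m)).symm ((fderiv ℝ F (s, c, x, -x)).comp (A4 m)) :=
    (hasFDerivAt_iff_hasGradientAt.mp h3).gradient
  rw [g1, g2, g3, ContinuousLinearMap.comp_sub, map_sub]

end aux


/-- For `α = β = 1` (where `ₐD_t^1 f = f'` and `ₜD_b^1 f = -f'`), the fractional
Euler-Lagrange equations `∂₂L + ₜD_b^1 ∂₃L + ₐD_t^1 ∂₄L = 0` reduce to the classical
Euler-Lagrange equations `(d/dt)∂₃𝓛(t,q,q̇) = ∂₂𝓛(t,q,q̇)` for the Lagrangian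
`𝓛(t,q,v) := L(t,q,v,-v)` (so that `∂₃𝓛 = ∂₃L - ∂₄L`). -/
theorem fractional_EL_reduces_to_classical
    {m : ℕ} (a b : ℝ) (hab : a < b)
    (L : ℝ → EuclideanSpace ℝ (Fin m) → EuclideanSpace ℝ (Fin m) →
      EuclideanSpace ℝ (Fin m) → ℝ)
    (hL : ContDiff ℝ 2 (fun p : ℝ × EuclideanSpace ℝ (Fin m) ×
      EuclideanSpace ℝ (Fin m) × EuclideanSpace ℝ (Fin m) =>
      L p.1 p.2.1 p.2.2.1 p.2.2.2))
    (q : ℝ → EuclideanSpace ℝ (Fin m)) (hq : ContDiff ℝ 2 q)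
    -- fractional Euler-Lagrange equations with α = β = 1 :
    (hfEL : ∀ t ∈ Icc a b,
      gradient (fun y => L t y (deriv q t) (-(deriv q t))) (q t)
        - deriv (fun s =>
            gradient (fun v => L s (q s) v (-(deriv q s))) (deriv q s)) t
        + deriv (fun s =>
            gradient (fun w => L s (q s) (deriv q s) w) (-(deriv q s))) t
        = 0) :
    -- classical Euler-Lagrange equations for 𝓛(t,q,v) = L(t,q,v,-v) :
    ∀ t ∈ Icc a b,
      deriv (fun s => gradient (fun v => L s (q s) v (-v)) (deriv q s)) t
        = gradient (fun y => L t y (deriv q t) (-(deriv q t))) (q t) := by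
  intro t ht
  set F : ℝ × EuclideanSpace ℝ (Fin m) × EuclideanSpace ℝ (Fin m) ×
      EuclideanSpace ℝ (Fin m) → ℝ := fun p => L p.1 p.2.1 p.2.2.1 p.2.2.2 with hFdef
  have hFdiff : Differentiable ℝ F := hL.differentiable (by norm_num)
  -- derivative of q
  have hq' : Differentiable ℝ q ∧ ContDiff ℝ 1 (deriv q) := by
    have h2 : ContDiff ℝ ((1 : WithTop ℕ∞) + 1) q := by
      convert hq using 2
      exact one_add_one_eq_two
    have := contDiff_succ_iff_deriv.mp h2
    exact ⟨this.1, this.2.2⟩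
  -- the path
  set γ : ℝ → ℝ × EuclideanSpace ℝ (Fin m) × EuclideanSpace ℝ (Fin m) ×
      EuclideanSpace ℝ (Fin m) := fun s => (s, q s, deriv q s, -(deriv q s)) with hγdef
  have hγ : Differentiable ℝ γ :=
    differentiable_id.prodMk (hq'.1.prodMk
      ((hq'.2.differentiable one_ne_zero).prodMk (hq'.2.differentiable one_ne_zero).neg))
  have hDF : ContDiff ℝ 1 (fderiv ℝ F) := hL.fderiv_right (by norm_num)
  -- continuous linear postcomposition maps
  set T3 : ((ℝ × EuclideanSpace ℝ (Fin m) × EuclideanSpace ℝ (Fin m) ×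
      EuclideanSpace ℝ (Fin m)) →L[ℝ] ℝ) → EuclideanSpace ℝ (Fin m) :=
    fun D => (toDual ℝ (EuclideanSpace ℝ (Fin m))).symm (D.comp (A3 m)) with hT3
  set T4 : ((ℝ × EuclideanSpace ℝ (Fin m) × EuclideanSpace ℝ (Fin m) ×
      EuclideanSpace ℝ (Fin m)) →L[ℝ] ℝ) → EuclideanSpace ℝ (Fin m) :=
    fun D => (toDual ℝ (EuclideanSpace ℝ (Fin m))).symm (D.comp (A4 m)) with hT4
  have hT3diff : Differentiable ℝ T3 := by
    apply Differentiable.comp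
    · exact (toDual ℝ (EuclideanSpace ℝ (Fin m))).symm.toContinuousLinearEquiv
        |>.toContinuousLinearMap.differentiable
    · exact ((ContinuousLinearMap.compL ℝ (EuclideanSpace ℝ (Fin m)) _ ℝ).flip
        (A3 m)).differentiable
  have hT4diff : Differentiable ℝ T4 := by
    apply Differentiable.comp
    · exact (toDual ℝ (EuclideanSpace ℝ (Fin m))).symm.toContinuousLinearEquiv
        |>.toContinuousLinearMap.differentiable
    · exact ((ContinuousLinearMap.compL ℝ (EuclideanSpace ℝ (Fin m)) _ ℝ).flip
        (A4 m)).differentiable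
  -- the two gradient paths
  have hg2eq : (fun s => gradient (fun v => L s (q s) v (-(deriv q s))) (deriv q s))
      = fun s => T3 (fderiv ℝ F (γ s)) := by
    funext s
    have h2 := hasFDerivAt_slot3 F hFdiff s (q s) (deriv q s) (-(deriv q s))
    exact (hasFDerivAt_iff_hasGradientAt.mp h2).gradient
  have hg3eq : (fun s => gradient (fun w => L s (q s) (deriv q s) w) (-(deriv q s)))
      = fun s => T4 (fderiv ℝ F (γ s)) := by
    funext s
    have h3 := hasFDerivAt_slot4 F hFdiff s (q s) (deriv q s) (-(deriv q s))
    exact (hasFDerivAt_iff_hasGradientAt.mp h3).gradient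
  have hd2 : DifferentiableAt ℝ (fun s => T3 (fderiv ℝ F (γ s))) t :=
    ((hT3diff _).comp _ (((hDF.differentiable one_ne_zero) _).comp _ (hγ t)))
  have hd3 : DifferentiableAt ℝ (fun s => T4 (fderiv ℝ F (γ s))) t :=
    ((hT4diff _).comp _ (((hDF.differentiable one_ne_zero) _).comp _ (hγ t)))
  -- split the main path
  have hsplit : (fun s => gradient (fun v => L s (q s) v (-v)) (deriv q s))
      = fun s => T3 (fderiv ℝ F (γ s)) - T4 (fderiv ℝ F (γ s)) := by
    funext s
    have := gradient_split F hFdiff s (q s) (deriv q s)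
    rw [show (fun v => L s (q s) v (-v)) = (fun v => F (s, q s, v, -v)) from rfl] at *
    rw [this]
    have h2 := hasFDerivAt_slot3 F hFdiff s (q s) (deriv q s) (-(deriv q s))
    have h3 := hasFDerivAt_slot4 F hFdiff s (q s) (deriv q s) (-(deriv q s))
    rw [(hasFDerivAt_iff_hasGradientAt.mp h2).gradient,
      (hasFDerivAt_iff_hasGradientAt.mp h3).gradient]
  rw [hsplit, deriv_fun_sub hd2 hd3, ← hg2eq, ← hg3eq] at *
  have h := hfEL t ht
  rw [sub_add, sub_eq_zero] at h
  exact h.symm
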